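/- For partitions λ, μ and a sequence of positive integers α = (α_1,…,α_s), the coefficient of m_λ in m_μ · h_{α_1}⋯h_{α_s} equals the number of h-brick tabloids of shape λ and extended content (μ;α): tilings of the diagram of λ by ℓ(μ) horizontal bricks labeled 0 of lengths μ_1,…,μ_{ℓ(μ)} together with, for each 1 ≤ i ≤ s, exactly α_i unit (1×1) bricks labeled i, covering each cell exactly once, with brick labels weakly increasing left to right in each row and at most one 0-labeled brick per row. -/

import Mathlib

open Classical

/-- The complete homogeneous symmetric function `h_n`: the sum of all monomials of
degree `n`. -/
noncomputable def hS (n : ℕ) : MvPowerSeries ℕ ℚ :=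
  fun d => if d.sum (fun _ m => m) = n then 1 else 0

/-- The monomial symmetric function `m_μ`: the sum of all distinct monomials whose
multiset of (nonzero) exponents is `μ`. -/
noncomputable def mS (mu : Multiset ℕ) : MvPowerSeries ℕ ℚ :=
  fun d => if d.support.val.map (fun j => d j) = mu then 1 else 0

/-- An h-brick tabloid of shape `L` (row `j` has `L j` cells) and extended content
`(μ; α)` is encoded by: `g : ℕ →₀ ℕ`, where `g j` is the length of the at most one
`0`-labeled brick in row `j` (`0` = none), and `c : Fin s → (ℕ →₀ ℕ)`, where
`c i j` is the number of unit bricks labeled `i+1` placed in row `j`.  There are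
`α i` unit bricks labeled `i+1` in total, the multiset of `0`-brick lengths is
`μ`, and the bricks in each row exactly cover it.  (Labels weakly increase from
left to right within a row, so this data determines the tiling.) -/
theorem coeff_m_mul_prod_h_eq_card_hBrickTabloids
    (lam mu : Multiset ℕ) (hlam : 0 ∉ lam) (hmu : 0 ∉ mu)
    (s : ℕ) (α : Fin s → ℕ) (hα : ∀ i, 0 < α i)
    (L : ℕ →₀ ℕ) (hL : L.support.val.map (fun j => L j) = lam) :
    MvPowerSeries.coeff L (mS mu * ∏ i, hS (α i))
      = (Nat.card {T : (ℕ →₀ ℕ) × (Fin s → ℕ →₀ ℕ) //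
          T.1.support.val.map (fun j => T.1 j) = mu ∧
          (∀ i, (T.2 i).sum (fun _ c => c) = α i) ∧
          ∀ j, T.1 j + ∑ i, T.2 i j = L j} : ℚ) := by
  classical
  set Q : (Σ _ : (ℕ →₀ ℕ) × (ℕ →₀ ℕ), (Fin s →₀ (ℕ →₀ ℕ))) → Prop :=
    fun x => x.1.1.support.val.map (fun j => x.1.1 j) = mu ∧
      ∀ i, (x.2 i).sum (fun _ c => c) = α i with hQ
  set F : Finset (Σ _ : (ℕ →₀ ℕ) × (ℕ →₀ ℕ), (Fin s →₀ (ℕ →₀ ℕ))) :=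
    (Finset.HasAntidiagonal.antidiagonal L).sigma
      (fun p => Finset.finsuppAntidiag Finset.univ p.2) with hF
  have key : MvPowerSeries.coeff L (mS mu * ∏ i, hS (α i))
      = ((F.filter Q).card : ℚ) := by
    rw [MvPowerSeries.coeff_mul]
    have h1 : ∀ p : ((ℕ →₀ ℕ) × (ℕ →₀ ℕ)),
        MvPowerSeries.coeff p.2 (∏ i, hS (α i)) =
          ∑ l ∈ Finset.finsuppAntidiag Finset.univ p.2,
            ∏ i, MvPowerSeries.coeff (l i) (hS (α i)) := by
      intro p; exact MvPowerSeries.coeff_prod _ _ _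
    simp only [h1, Finset.mul_sum]
    rw [Finset.sum_sigma']
    rw [← Finset.sum_boole]
    apply Finset.sum_congr rfl
    rintro ⟨p, l⟩ hx
    simp only [MvPowerSeries.coeff_apply, mS, hS, Finset.prod_boole, hQ]
    by_cases hA : p.1.support.val.map (fun j => p.1 j) = mu <;>
      by_cases hB : ∀ i, (l i).sum (fun _ c => c) = α i <;>
      simp [hA, hB]
  rw [key]
  congr 1
  have e : {T : (ℕ →₀ ℕ) × (Fin s → ℕ →₀ ℕ) //
          T.1.support.val.map (fun j => T.1 j) = mu ∧
          (∀ i, (T.2 i).sum (fun _ c => c) = α i) ∧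
          ∀ j, T.1 j + ∑ i, T.2 i j = L j} ≃ {x // x ∈ F.filter Q} := by
    refine ⟨fun T => ⟨⟨(T.1.1, ∑ i, Finsupp.equivFunOnFinite.symm T.1.2 i),
        Finsupp.equivFunOnFinite.symm T.1.2⟩, ?_⟩,
      fun x => ⟨(x.1.1.1, fun i => x.1.2 i), ?_⟩, ?_, ?_⟩
    · obtain ⟨⟨g, c⟩, hgc1, hgc2, hgc3⟩ := T
      refine Finset.mem_filter.mpr ⟨Finset.mem_sigma.mpr ⟨Finset.HasAntidiagonal.mem_antidiagonal.mpr ?_,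
        Finset.mem_finsuppAntidiag.mpr ⟨rfl, Finset.subset_univ _⟩⟩, hgc1, fun i => ?_⟩
      · ext j
        simp only [Finsupp.add_apply, Finsupp.finset_sum_apply,
          Finsupp.equivFunOnFinite_symm_apply_apply]
        exact hgc3 j
      · simpa using hgc2 i
    · obtain ⟨⟨p, l⟩, hx⟩ := x
      simp only [Finset.mem_filter, Finset.mem_sigma, Finset.HasAntidiagonal.mem_antidiagonal,
        Finset.mem_finsuppAntidiag, hQ, hF] at hx
      obtain ⟨⟨hpL, hlp, -⟩, hmu', hα'⟩ := hx
      refine ⟨hmu', hα', fun j => ?_⟩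
      have := congrArg (fun f : ℕ →₀ ℕ => f j) hpL
      simp only [Finsupp.add_apply] at this
      rw [← this]
      congr 1
      rw [← hlp]
      simp [Finsupp.finset_sum_apply]
    · rintro ⟨⟨g, c⟩, h⟩
      simp
    · rintro ⟨⟨p, l⟩, hx⟩
      simp only [Finset.mem_filter, Finset.mem_sigma, Finset.HasAntidiagonal.mem_antidiagonal,
        Finset.mem_finsuppAntidiag, hQ, hF] at hx
      obtain ⟨⟨hpL, hlp, -⟩, -, -⟩ := hx
      apply Subtype.ext
      apply Sigma.ext
      · apply Prod.ext
        · rfl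
        · show (∑ i, Finsupp.equivFunOnFinite.symm (fun i => l i) i) = p.2
          rw [← hlp]
          apply Finset.sum_congr rfl
          intro i _
          simp
      · apply heq_of_eq
        show Finsupp.equivFunOnFinite.symm (fun i => l i) = l
        exact Finsupp.equivFunOnFinite_symm_coe l
  rw [Nat.card_congr e, Nat.card_eq_fintype_card, Fintype.card_coe]
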